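/- In the setting of the fire sales process and the auxiliary process on the same finite system (same x_i, c_i, ℓ_i, ρ, h), for every round k the cumulative sales of the fire sales process are dominated by those of the auxiliary process: τ_(k) ≤ σ_(k) componentwise, for all k ≥ 1. Consequently the final sales satisfy ψ_n = lim_k τ_(k)/n ≤ lim_k σ_(k)/n = χ_n componentwise. -/

import Mathlib

open Filter Finset

/-- The auxiliary process dominates the fire sales process round by round
(`τ_(k) ≤ σ_(k)`), hence also in the limit (`ψ_n ≤ χ_n`).
Indices are shifted so that round `k+1` of the paper is index `k`. -/
theorem stmt2 (M n : ℕ) (hn : 0 < n)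
    (x : Fin n → Fin M → ℝ) (hx : ∀ i m, 0 ≤ x i m)
    (ℓ : Fin n → ℝ) (hℓ : ∀ i, 0 ≤ ℓ i)
    (c : Fin n → ℝ) (hc : ∀ i, 0 < c i)
    (ρ : ℝ → ℝ) (hρ0 : ρ 0 = 0) (hρmono : Monotone ρ)
    (hρrange : ∀ u, 0 ≤ ρ u ∧ ρ u ≤ 1)
    (h : (Fin M → ℝ) → Fin M → ℝ)
    (hhrange : ∀ χ m, 0 ≤ h χ m ∧ h χ m ≤ 1)
    (hhmono : ∀ χ χ' : Fin M → ℝ, (∀ m, χ m ≤ χ' m) → ∀ m, h χ m ≤ h χ' m)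
    -- fire sales process
    (xk : Fin n → ℕ → Fin M → ℝ) (τ : ℕ → Fin M → ℝ) (ℓk : Fin n → ℕ → ℝ)
    (hxk0 : ∀ i, xk i 0 = x i)
    (hxkrec : ∀ i k m, xk i (k + 1) m = x i m * (1 - ρ (ℓk i k / c i)))
    (hτ0 : τ 0 = 0)
    (hτrec : ∀ k m, τ (k + 1) m = ∑ i, x i m * ρ (ℓk i k / c i))
    (hℓk : ∀ i k, ℓk i k = ℓ i
        + (∑ m, xk i k m * h (fun m' => τ k m' / n) m)
        + ∑ j ∈ Finset.range k, ∑ m, (xk i j m - xk i (j + 1) m) * h (fun m' => τ j m' / n) m)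
    -- auxiliary process
    (σ : ℕ → Fin M → ℝ) (hσ0 : σ 0 = 0)
    (hσrec : ∀ k m, σ (k + 1) m =
        ∑ i, x i m * ρ ((ℓ i + ∑ m', x i m' * h (fun m'' => σ k m'' / n) m') / c i)) :
    (∀ k m, τ k m ≤ σ k m) ∧
    ∀ ψ χ : Fin M → ℝ,
      (∀ m, Tendsto (fun k => τ k m / n) atTop (nhds (ψ m))) →
      (∀ m, Tendsto (fun k => σ k m / n) atTop (nhds (χ m))) →
      ∀ m, ψ m ≤ χ m := by
  have hn' : (0:ℝ) < n := by exact_mod_cast hn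
  have hxk_nonneg : ∀ i k m, 0 ≤ xk i k m := by
    intro i k m
    match k with
    | 0 => rw [hxk0]; exact hx i m
    | k+1 =>
      rw [hxkrec]
      exact mul_nonneg (hx i m) (by linarith [(hρrange (ℓk i k / c i)).2])
  -- B from A
  have hB : ∀ k, (∀ m, τ k m ≤ τ (k+1) m) → ∀ i, ℓk i k ≤ ℓk i (k+1) := by
    intro k hA i
    have hh : ∀ m, h (fun m' => τ k m' / n) m ≤ h (fun m' => τ (k+1) m' / n) m := by
      apply hhmono
      intro m'
      gcongr
      exact hA m'
    rw [hℓk i k, hℓk i (k+1), Finset.sum_range_succ]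
    have key : ∑ m, xk i (k+1) m * h (fun m' => τ k m' / n) m
        ≤ ∑ m, xk i (k+1) m * h (fun m' => τ (k+1) m' / n) m :=
      Finset.sum_le_sum fun m _ => mul_le_mul_of_nonneg_left (hh m) (hxk_nonneg i (k+1) m)
    have expand : ∑ m, (xk i k m - xk i (k+1) m) * h (fun m' => τ k m' / n) m
        = ∑ m, xk i k m * h (fun m' => τ k m' / n) m
          - ∑ m, xk i (k+1) m * h (fun m' => τ k m' / n) m := by
      rw [← Finset.sum_sub_distrib]
      exact Finset.sum_congr rfl fun m _ => by ring
    linarith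
  -- A for successor from B
  have hAsucc : ∀ k, (∀ i, ℓk i k ≤ ℓk i (k+1)) → ∀ m, τ (k+1) m ≤ τ (k+2) m := by
    intro k hBk m
    rw [hτrec, hτrec]
    exact Finset.sum_le_sum fun i _ => mul_le_mul_of_nonneg_left
      (hρmono (div_le_div_of_nonneg_right (hBk i) (hc i).le)) (hx i m)
  have hA0 : ∀ m, τ 0 m ≤ τ 1 m := by
    intro m
    simp only [hτ0, Pi.zero_apply, hτrec]
    exact Finset.sum_nonneg fun i _ => mul_nonneg (hx i m) (hρrange _).1
  have hAll : ∀ k, (∀ m, τ k m ≤ τ (k+1) m) ∧ (∀ i, ℓk i k ≤ ℓk i (k+1)) := by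
    intro k
    induction k with
    | zero => exact ⟨hA0, hB 0 hA0⟩
    | succ k ih =>
      have hA := hAsucc k ih.2
      exact ⟨hA, hB (k+1) hA⟩
  have hτmono : ∀ m, Monotone fun k => τ k m := fun m =>
    monotone_nat_of_le_succ fun k => (hAll k).1 m
  have hℓmono : ∀ i, Monotone fun k => ℓk i k := fun i =>
    monotone_nat_of_le_succ fun k => (hAll k).2 i
  have hdiff : ∀ i j m, 0 ≤ xk i j m - xk i (j+1) m := by
    intro i j m
    match j with
    | 0 =>
      rw [hxk0, hxkrec]
      have h1 := (hρrange (ℓk i 0 / c i)).1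
      nlinarith [hx i m]
    | j+1 =>
      rw [hxkrec, hxkrec]
      have h1 : ρ (ℓk i j / c i) ≤ ρ (ℓk i (j+1) / c i) :=
        hρmono (div_le_div_of_nonneg_right (hℓmono i (Nat.le_succ j)) (hc i).le)
      nlinarith [hx i m]
  -- key bound: ℓk i k ≤ ℓ i + ∑ x i m h(τ k / n) m
  have hℓbound : ∀ i k, ℓk i k ≤ ℓ i + ∑ m, x i m * h (fun m' => τ k m' / n) m := by
    intro i k
    rw [hℓk]
    have step1 : ∀ j ∈ Finset.range k,
        ∑ m, (xk i j m - xk i (j+1) m) * h (fun m' => τ j m' / n) m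
        ≤ ∑ m, (xk i j m - xk i (j+1) m) * h (fun m' => τ k m' / n) m := by
      intro j hj
      refine Finset.sum_le_sum fun m _ => mul_le_mul_of_nonneg_left ?_ (hdiff i j m)
      apply hhmono
      intro m'
      gcongr
      exact hτmono m' (Nat.le_of_lt (Finset.mem_range.mp hj))
    have step2 : ∑ j ∈ Finset.range k, ∑ m, (xk i j m - xk i (j+1) m) * h (fun m' => τ j m' / n) m
        ≤ ∑ m, (x i m - xk i k m) * h (fun m' => τ k m' / n) m := by
      calc ∑ j ∈ Finset.range k, ∑ m, (xk i j m - xk i (j+1) m) * h (fun m' => τ j m' / n) m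
          ≤ ∑ j ∈ Finset.range k, ∑ m, (xk i j m - xk i (j+1) m) * h (fun m' => τ k m' / n) m :=
            Finset.sum_le_sum step1
        _ = ∑ m, (∑ j ∈ Finset.range k, (xk i j m - xk i (j+1) m)) * h (fun m' => τ k m' / n) m := by
            rw [Finset.sum_comm]
            exact Finset.sum_congr rfl fun m _ => by rw [Finset.sum_mul]
        _ = ∑ m, (x i m - xk i k m) * h (fun m' => τ k m' / n) m := by
            refine Finset.sum_congr rfl fun m _ => ?_
            rw [Finset.sum_range_sub' (fun j => xk i j m), hxk0]
    have expand : ∑ m, (x i m - xk i k m) * h (fun m' => τ k m' / n) m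
        = ∑ m, x i m * h (fun m' => τ k m' / n) m
          - ∑ m, xk i k m * h (fun m' => τ k m' / n) m := by
      rw [← Finset.sum_sub_distrib]
      exact Finset.sum_congr rfl fun m _ => by ring
    linarith
  -- main domination
  have hτσ : ∀ k m, τ k m ≤ σ k m := by
    intro k
    induction k with
    | zero => intro m; rw [hτ0, hσ0]
    | succ k ih =>
      intro m
      rw [hτrec, hσrec]
      refine Finset.sum_le_sum fun i _ => mul_le_mul_of_nonneg_left
        (hρmono (div_le_div_of_nonneg_right ?_ (hc i).le)) (hx i m)
      calc ℓk i k ≤ ℓ i + ∑ m', x i m' * h (fun m'' => τ k m'' / n) m' := hℓbound i k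
        _ ≤ ℓ i + ∑ m', x i m' * h (fun m'' => σ k m'' / n) m' := by
            refine add_le_add_right (Finset.sum_le_sum fun m' _ =>
              mul_le_mul_of_nonneg_left ?_ (hx i m')) (ℓ i)
            apply hhmono
            intro m''
            exact div_le_div_of_nonneg_right (ih m'') hn'.le
  refine ⟨hτσ, ?_⟩
  intro ψ χ hψ hχ m
  refine le_of_tendsto_of_tendsto' (hψ m) (hχ m) fun k => ?_
  gcongr
  exact hτσ k m
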